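/- Let Ω ⊂ (0,∞)×ℝ be a measurable set and Ω̂ := {(x,y,z) ∈ ℝ³ : (√(x²+y²), z) ∈ Ω} its solid of revolution. Let u = (u_r,u_z) and v = (v_r,v_z) be C¹ vector fields on (0,∞)×ℝ such that the function (r,z) ↦ r·( |∇u(r,z)|·|∇v(r,z)| + r⁻²·|u_r(r,z)|·|v_r(r,z)| ) is Lebesgue-integrable on Ω. Then ∫_{Ω̂} Dû : Dv̂ dx dy dz = 2π · ∫_Ω r·( ∇u : ∇v + r⁻² u_r v_r ) dr dz, where û, v̂ are the revolved vector fields. -/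

import Mathlib

set_option maxHeartbeats 2000000
open Real Set


open MeasureTheory

noncomputable section

/-- Partial derivatives of scalar functions on `ℝ²`. -/
def pdr (f : ℝ × ℝ → ℝ) (p : ℝ × ℝ) : ℝ := fderiv ℝ f p (1, 0)
def pdz (f : ℝ × ℝ → ℝ) (p : ℝ × ℝ) : ℝ := fderiv ℝ f p (0, 1)

/-- Partial derivatives of scalar functions on `ℝ³ = ℝ × ℝ × ℝ`. -/
def pdx3 (f : ℝ × ℝ × ℝ → ℝ) (q : ℝ × ℝ × ℝ) : ℝ := fderiv ℝ f q (1, 0, 0)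
def pdy3 (f : ℝ × ℝ × ℝ → ℝ) (q : ℝ × ℝ × ℝ) : ℝ := fderiv ℝ f q (0, 1, 0)
def pdz3 (f : ℝ × ℝ × ℝ → ℝ) (q : ℝ × ℝ × ℝ) : ℝ := fderiv ℝ f q (0, 0, 1)

/-- The Frobenius inner product `∇F : ∇G` of the 2×2 Jacobians of two planar fields. -/
def jdot2 (F G : ℝ × ℝ → ℝ × ℝ) (p : ℝ × ℝ) : ℝ :=
  pdr (fun s => (F s).1) p * pdr (fun s => (G s).1) p +
  pdz (fun s => (F s).1) p * pdz (fun s => (G s).1) p +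
  pdr (fun s => (F s).2) p * pdr (fun s => (G s).2) p +
  pdz (fun s => (F s).2) p * pdz (fun s => (G s).2) p

/-- The Frobenius norm `|∇F|_F` of the 2×2 Jacobian of a planar field. -/
def fnorm2 (F : ℝ × ℝ → ℝ × ℝ) (p : ℝ × ℝ) : ℝ := Real.sqrt (jdot2 F F p)

/-- The Frobenius inner product `DF : DG` of the 3×3 Jacobians of two spatial fields. -/
def jdot3 (F G : ℝ × ℝ × ℝ → ℝ × ℝ × ℝ) (q : ℝ × ℝ × ℝ) : ℝ :=
  pdx3 (fun s => (F s).1) q * pdx3 (fun s => (G s).1) q +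
  pdy3 (fun s => (F s).1) q * pdy3 (fun s => (G s).1) q +
  pdz3 (fun s => (F s).1) q * pdz3 (fun s => (G s).1) q +
  pdx3 (fun s => (F s).2.1) q * pdx3 (fun s => (G s).2.1) q +
  pdy3 (fun s => (F s).2.1) q * pdy3 (fun s => (G s).2.1) q +
  pdz3 (fun s => (F s).2.1) q * pdz3 (fun s => (G s).2.1) q +
  pdx3 (fun s => (F s).2.2) q * pdx3 (fun s => (G s).2.2) q +
  pdy3 (fun s => (F s).2.2) q * pdy3 (fun s => (G s).2.2) q +
  pdz3 (fun s => (F s).2.2) q * pdz3 (fun s => (G s).2.2) q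

/-- The revolved vector field `û` on `ℝ³` associated with the meridian field `(u_r, u_z)`. -/
def revolve (ur uz : ℝ × ℝ → ℝ) (q : ℝ × ℝ × ℝ) : ℝ × ℝ × ℝ :=
  (ur (Real.sqrt (q.1 ^ 2 + q.2.1 ^ 2), q.2.2) * q.1 / Real.sqrt (q.1 ^ 2 + q.2.1 ^ 2),
   ur (Real.sqrt (q.1 ^ 2 + q.2.1 ^ 2), q.2.2) * q.2.1 / Real.sqrt (q.1 ^ 2 + q.2.1 ^ 2),
   uz (Real.sqrt (q.1 ^ 2 + q.2.1 ^ 2), q.2.2))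

/-- The solid of revolution of a meridian set `Ω ⊆ (0,∞) × ℝ`. -/
def solidRev (Ω : Set (ℝ × ℝ)) : Set (ℝ × ℝ × ℝ) :=
  {q : ℝ × ℝ × ℝ | (Real.sqrt (q.1 ^ 2 + q.2.1 ^ 2), q.2.2) ∈ Ω}


lemma pdr_eq (f : ℝ × ℝ → ℝ) (p : ℝ × ℝ) : fderiv ℝ f p (1,0) = pdr f p := rfl
lemma pdz_eq (f : ℝ × ℝ → ℝ) (p : ℝ × ℝ) : fderiv ℝ f p (0,1) = pdz f p := rfl

lemma clm_eval2 (L : (ℝ × ℝ) →L[ℝ] ℝ) (x y : ℝ) :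
    L (x, y) = x * L (1, 0) + y * L (0, 1) := by
  have h : (x, y) = x • ((1:ℝ), (0:ℝ)) + y • ((0:ℝ), (1:ℝ)) := by simp
  rw [h, map_add, _root_.map_smul, _root_.map_smul, smul_eq_mul, smul_eq_mul]

def Lρ (q : ℝ × ℝ × ℝ) : (ℝ × ℝ × ℝ) →L[ℝ] ℝ :=
  (1 / (2 * Real.sqrt (q.1 ^ 2 + q.2.1 ^ 2))) •
        (((2 * q.1 ^ 1) • ContinuousLinearMap.fst ℝ ℝ (ℝ × ℝ)) +
         ((2 * q.2.1 ^ 1) • ((ContinuousLinearMap.fst ℝ ℝ ℝ).comp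
            (ContinuousLinearMap.snd ℝ ℝ (ℝ × ℝ)))))

lemma hasFDerivAt_rho (q : ℝ × ℝ × ℝ) (hq : 0 < Real.sqrt (q.1 ^ 2 + q.2.1 ^ 2)) :
    HasFDerivAt (fun w : ℝ × ℝ × ℝ => Real.sqrt (w.1 ^ 2 + w.2.1 ^ 2)) (Lρ q) q := by
  have hx : HasFDerivAt (fun w : ℝ × ℝ × ℝ => w.1 ^ 2)
      ((2 * q.1 ^ 1) • ContinuousLinearMap.fst ℝ ℝ (ℝ × ℝ)) q := by
    have := (hasDerivAt_pow 2 q.1).comp_hasFDerivAt (𝕜 := ℝ) q (hasFDerivAt_fst (p := q))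
    simpa [Function.comp_def] using this
  have hy : HasFDerivAt (fun w : ℝ × ℝ × ℝ => w.2.1 ^ 2)
      ((2 * q.2.1 ^ 1) • ((ContinuousLinearMap.fst ℝ ℝ ℝ).comp
        (ContinuousLinearMap.snd ℝ ℝ (ℝ × ℝ)))) q := by
    have := (hasDerivAt_pow 2 q.2.1).comp_hasFDerivAt (𝕜 := ℝ) q
      (((hasFDerivAt_fst (p := q.2)).comp q (hasFDerivAt_snd (p := q))) :
        HasFDerivAt (fun w : ℝ × ℝ × ℝ => w.2.1)
          ((ContinuousLinearMap.fst ℝ ℝ ℝ).comp (ContinuousLinearMap.snd ℝ ℝ (ℝ × ℝ))) q)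
    simpa [Function.comp_def] using this
  have hne : q.1 ^ 2 + q.2.1 ^ 2 ≠ 0 := by intro h; rw [h] at hq; simp at hq
  exact (Real.hasDerivAt_sqrt hne).comp_hasFDerivAt (𝕜 := ℝ) q (hx.add hy)

def Lφ (q : ℝ × ℝ × ℝ) : (ℝ × ℝ × ℝ) →L[ℝ] (ℝ × ℝ) :=
  (Lρ q).prod ((ContinuousLinearMap.snd ℝ ℝ ℝ).comp (ContinuousLinearMap.snd ℝ ℝ (ℝ × ℝ)))

lemma hasFDerivAt_phi (q : ℝ × ℝ × ℝ) (hq : 0 < Real.sqrt (q.1 ^ 2 + q.2.1 ^ 2)) :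
    HasFDerivAt (fun w : ℝ × ℝ × ℝ => (Real.sqrt (w.1 ^ 2 + w.2.1 ^ 2), w.2.2)) (Lφ q) q :=
  HasFDerivAt.prodMk (hasFDerivAt_rho q hq) ((hasFDerivAt_snd (p := q.2)).comp q (hasFDerivAt_snd (p := q)))

lemma pds (q : ℝ × ℝ × ℝ) (f : ℝ × ℝ → ℝ)
    (hq : 0 < Real.sqrt (q.1 ^ 2 + q.2.1 ^ 2))
    (hf : DifferentiableAt ℝ f (Real.sqrt (q.1 ^ 2 + q.2.1 ^ 2), q.2.2)) :
    (pdx3 (fun w => f (Real.sqrt (w.1 ^ 2 + w.2.1 ^ 2), w.2.2) * w.1 / Real.sqrt (w.1 ^ 2 + w.2.1 ^ 2)) q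
      = pdr f (Real.sqrt (q.1 ^ 2 + q.2.1 ^ 2), q.2.2) * (q.1 / Real.sqrt (q.1 ^ 2 + q.2.1 ^ 2)) ^ 2
        + f (Real.sqrt (q.1 ^ 2 + q.2.1 ^ 2), q.2.2) / Real.sqrt (q.1 ^ 2 + q.2.1 ^ 2)
            * (q.2.1 / Real.sqrt (q.1 ^ 2 + q.2.1 ^ 2)) ^ 2) ∧
    (pdy3 (fun w => f (Real.sqrt (w.1 ^ 2 + w.2.1 ^ 2), w.2.2) * w.1 / Real.sqrt (w.1 ^ 2 + w.2.1 ^ 2)) q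
      = pdr f (Real.sqrt (q.1 ^ 2 + q.2.1 ^ 2), q.2.2)
            * (q.1 / Real.sqrt (q.1 ^ 2 + q.2.1 ^ 2)) * (q.2.1 / Real.sqrt (q.1 ^ 2 + q.2.1 ^ 2))
        - f (Real.sqrt (q.1 ^ 2 + q.2.1 ^ 2), q.2.2) / Real.sqrt (q.1 ^ 2 + q.2.1 ^ 2)
            * (q.1 / Real.sqrt (q.1 ^ 2 + q.2.1 ^ 2)) * (q.2.1 / Real.sqrt (q.1 ^ 2 + q.2.1 ^ 2))) ∧
    (pdz3 (fun w => f (Real.sqrt (w.1 ^ 2 + w.2.1 ^ 2), w.2.2) * w.1 / Real.sqrt (w.1 ^ 2 + w.2.1 ^ 2)) q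
      = pdz f (Real.sqrt (q.1 ^ 2 + q.2.1 ^ 2), q.2.2) * (q.1 / Real.sqrt (q.1 ^ 2 + q.2.1 ^ 2))) ∧
    (pdx3 (fun w => f (Real.sqrt (w.1 ^ 2 + w.2.1 ^ 2), w.2.2) * w.2.1 / Real.sqrt (w.1 ^ 2 + w.2.1 ^ 2)) q
      = pdr f (Real.sqrt (q.1 ^ 2 + q.2.1 ^ 2), q.2.2)
            * (q.1 / Real.sqrt (q.1 ^ 2 + q.2.1 ^ 2)) * (q.2.1 / Real.sqrt (q.1 ^ 2 + q.2.1 ^ 2))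
        - f (Real.sqrt (q.1 ^ 2 + q.2.1 ^ 2), q.2.2) / Real.sqrt (q.1 ^ 2 + q.2.1 ^ 2)
            * (q.1 / Real.sqrt (q.1 ^ 2 + q.2.1 ^ 2)) * (q.2.1 / Real.sqrt (q.1 ^ 2 + q.2.1 ^ 2))) ∧
    (pdy3 (fun w => f (Real.sqrt (w.1 ^ 2 + w.2.1 ^ 2), w.2.2) * w.2.1 / Real.sqrt (w.1 ^ 2 + w.2.1 ^ 2)) q
      = pdr f (Real.sqrt (q.1 ^ 2 + q.2.1 ^ 2), q.2.2) * (q.2.1 / Real.sqrt (q.1 ^ 2 + q.2.1 ^ 2)) ^ 2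
        + f (Real.sqrt (q.1 ^ 2 + q.2.1 ^ 2), q.2.2) / Real.sqrt (q.1 ^ 2 + q.2.1 ^ 2)
            * (q.1 / Real.sqrt (q.1 ^ 2 + q.2.1 ^ 2)) ^ 2) ∧
    (pdz3 (fun w => f (Real.sqrt (w.1 ^ 2 + w.2.1 ^ 2), w.2.2) * w.2.1 / Real.sqrt (w.1 ^ 2 + w.2.1 ^ 2)) q
      = pdz f (Real.sqrt (q.1 ^ 2 + q.2.1 ^ 2), q.2.2) * (q.2.1 / Real.sqrt (q.1 ^ 2 + q.2.1 ^ 2))) ∧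
    (pdx3 (fun w => f (Real.sqrt (w.1 ^ 2 + w.2.1 ^ 2), w.2.2)) q
      = pdr f (Real.sqrt (q.1 ^ 2 + q.2.1 ^ 2), q.2.2) * (q.1 / Real.sqrt (q.1 ^ 2 + q.2.1 ^ 2))) ∧
    (pdy3 (fun w => f (Real.sqrt (w.1 ^ 2 + w.2.1 ^ 2), w.2.2)) q
      = pdr f (Real.sqrt (q.1 ^ 2 + q.2.1 ^ 2), q.2.2) * (q.2.1 / Real.sqrt (q.1 ^ 2 + q.2.1 ^ 2))) ∧
    (pdz3 (fun w => f (Real.sqrt (w.1 ^ 2 + w.2.1 ^ 2), w.2.2)) q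
      = pdz f (Real.sqrt (q.1 ^ 2 + q.2.1 ^ 2), q.2.2)) := by
  have hφ := hasFDerivAt_phi q hq
  have hρ := hasFDerivAt_rho q hq
  have hcomp : HasFDerivAt (fun w : ℝ × ℝ × ℝ => f (Real.sqrt (w.1 ^ 2 + w.2.1 ^ 2), w.2.2))
      ((fderiv ℝ f (Real.sqrt (q.1 ^ 2 + q.2.1 ^ 2), q.2.2)).comp (Lφ q)) q :=
    (hf.hasFDerivAt).comp q hφ
  have hinv : HasFDerivAt (fun w : ℝ × ℝ × ℝ => (Real.sqrt (w.1 ^ 2 + w.2.1 ^ 2))⁻¹)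
      ((-((Real.sqrt (q.1 ^ 2 + q.2.1 ^ 2)) ^ 2)⁻¹) • Lρ q) q :=
    (hasDerivAt_inv hq.ne').comp_hasFDerivAt (𝕜 := ℝ) q hρ
  have hX : HasFDerivAt (fun w : ℝ × ℝ × ℝ => w.1) (ContinuousLinearMap.fst ℝ ℝ (ℝ × ℝ)) q :=
    hasFDerivAt_fst
  have hY : HasFDerivAt (fun w : ℝ × ℝ × ℝ => w.2.1)
      ((ContinuousLinearMap.fst ℝ ℝ ℝ).comp (ContinuousLinearMap.snd ℝ ℝ (ℝ × ℝ))) q :=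
    (hasFDerivAt_fst (p := q.2)).comp q (hasFDerivAt_snd (p := q))
  have h1 := (hcomp.mul hX).mul hinv
  have h2 := (hcomp.mul hY).mul hinv
  simp only [Pi.mul_def] at h1 h2
  have hsq : Real.sqrt (q.1 ^ 2 + q.2.1 ^ 2) ^ 2 = q.1 ^ 2 + q.2.1 ^ 2 :=
    Real.sq_sqrt (by positivity)
  simp only [div_eq_mul_inv]
  refine ⟨?_, ?_, ?_, ?_, ?_, ?_, ?_, ?_, ?_⟩
  · rw [pdx3, h1.fderiv]
    simp only [ContinuousLinearMap.smul_apply, ContinuousLinearMap.add_apply,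
      ContinuousLinearMap.comp_apply, ContinuousLinearMap.prod_apply,
      ContinuousLinearMap.coe_fst', ContinuousLinearMap.coe_snd', Lφ, Lρ, smul_eq_mul]
    try rw [clm_eval2 (fderiv ℝ f _)]
    try simp only [pdr_eq, pdz_eq]
    try clear h1 h2 hinv hX hY hcomp hρ hφ hf
    try generalize hgen : Real.sqrt (q.1 ^ 2 + q.2.1 ^ 2) = r at hq hsq ⊢
    try field_simp
    try ring_nf
    try linear_combination (f (r, q.2.2) * r ^ 7 * 4) * hsq
    linear_combination (f (r, q.2.2)) * hsq
  · rw [pdy3, h1.fderiv]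
    simp only [ContinuousLinearMap.smul_apply, ContinuousLinearMap.add_apply,
      ContinuousLinearMap.comp_apply, ContinuousLinearMap.prod_apply,
      ContinuousLinearMap.coe_fst', ContinuousLinearMap.coe_snd', Lφ, Lρ, smul_eq_mul]
    try rw [clm_eval2 (fderiv ℝ f _)]
    try simp only [pdr_eq, pdz_eq]
    try clear h1 h2 hinv hX hY hcomp hρ hφ hf
    try generalize hgen : Real.sqrt (q.1 ^ 2 + q.2.1 ^ 2) = r at hq hsq ⊢
    try field_simp
    try ring_nf
    try linear_combination (f (r, q.2.2) * r ^ 7 * 4) * hsq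
  · rw [pdz3, h1.fderiv]
    simp only [ContinuousLinearMap.smul_apply, ContinuousLinearMap.add_apply,
      ContinuousLinearMap.comp_apply, ContinuousLinearMap.prod_apply,
      ContinuousLinearMap.coe_fst', ContinuousLinearMap.coe_snd', Lφ, Lρ, smul_eq_mul]
    try rw [clm_eval2 (fderiv ℝ f _)]
    try simp only [pdr_eq, pdz_eq]
    try clear h1 h2 hinv hX hY hcomp hρ hφ hf
    try generalize hgen : Real.sqrt (q.1 ^ 2 + q.2.1 ^ 2) = r at hq hsq ⊢
    try field_simp
    try ring_nf
    try linear_combination (f (r, q.2.2) * r ^ 7 * 4) * hsq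
  · rw [pdx3, h2.fderiv]
    simp only [ContinuousLinearMap.smul_apply, ContinuousLinearMap.add_apply,
      ContinuousLinearMap.comp_apply, ContinuousLinearMap.prod_apply,
      ContinuousLinearMap.coe_fst', ContinuousLinearMap.coe_snd', Lφ, Lρ, smul_eq_mul]
    try rw [clm_eval2 (fderiv ℝ f _)]
    try simp only [pdr_eq, pdz_eq]
    try clear h1 h2 hinv hX hY hcomp hρ hφ hf
    try generalize hgen : Real.sqrt (q.1 ^ 2 + q.2.1 ^ 2) = r at hq hsq ⊢
    try field_simp
    try ring_nf
    try linear_combination (f (r, q.2.2) * r ^ 7 * 4) * hsq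
  · rw [pdy3, h2.fderiv]
    simp only [ContinuousLinearMap.smul_apply, ContinuousLinearMap.add_apply,
      ContinuousLinearMap.comp_apply, ContinuousLinearMap.prod_apply,
      ContinuousLinearMap.coe_fst', ContinuousLinearMap.coe_snd', Lφ, Lρ, smul_eq_mul]
    try rw [clm_eval2 (fderiv ℝ f _)]
    try simp only [pdr_eq, pdz_eq]
    try clear h1 h2 hinv hX hY hcomp hρ hφ hf
    try generalize hgen : Real.sqrt (q.1 ^ 2 + q.2.1 ^ 2) = r at hq hsq ⊢
    try field_simp
    try ring_nf
    try linear_combination (f (r, q.2.2) * r ^ 7 * 4) * hsq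
    linear_combination (f (r, q.2.2)) * hsq
  · rw [pdz3, h2.fderiv]
    simp only [ContinuousLinearMap.smul_apply, ContinuousLinearMap.add_apply,
      ContinuousLinearMap.comp_apply, ContinuousLinearMap.prod_apply,
      ContinuousLinearMap.coe_fst', ContinuousLinearMap.coe_snd', Lφ, Lρ, smul_eq_mul]
    try rw [clm_eval2 (fderiv ℝ f _)]
    try simp only [pdr_eq, pdz_eq]
    try clear h1 h2 hinv hX hY hcomp hρ hφ hf
    try generalize hgen : Real.sqrt (q.1 ^ 2 + q.2.1 ^ 2) = r at hq hsq ⊢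
    try field_simp
    try ring_nf
    try linear_combination (f (r, q.2.2) * r ^ 7 * 4) * hsq
  · rw [pdx3, hcomp.fderiv]
    simp only [ContinuousLinearMap.smul_apply, ContinuousLinearMap.add_apply,
      ContinuousLinearMap.comp_apply, ContinuousLinearMap.prod_apply,
      ContinuousLinearMap.coe_fst', ContinuousLinearMap.coe_snd', Lφ, Lρ, smul_eq_mul]
    try rw [clm_eval2 (fderiv ℝ f _)]
    try simp only [pdr_eq, pdz_eq]
    try clear h1 h2 hinv hX hY hcomp hρ hφ hf
    try generalize hgen : Real.sqrt (q.1 ^ 2 + q.2.1 ^ 2) = r at hq hsq ⊢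
    try field_simp
    try ring_nf
    try linear_combination (f (r, q.2.2) * r ^ 7 * 4) * hsq
  · rw [pdy3, hcomp.fderiv]
    simp only [ContinuousLinearMap.smul_apply, ContinuousLinearMap.add_apply,
      ContinuousLinearMap.comp_apply, ContinuousLinearMap.prod_apply,
      ContinuousLinearMap.coe_fst', ContinuousLinearMap.coe_snd', Lφ, Lρ, smul_eq_mul]
    try rw [clm_eval2 (fderiv ℝ f _)]
    try simp only [pdr_eq, pdz_eq]
    try clear h1 h2 hinv hX hY hcomp hρ hφ hf
    try generalize hgen : Real.sqrt (q.1 ^ 2 + q.2.1 ^ 2) = r at hq hsq ⊢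
    try field_simp
    try ring_nf
    try linear_combination (f (r, q.2.2) * r ^ 7 * 4) * hsq
  · rw [pdz3, hcomp.fderiv]
    simp only [ContinuousLinearMap.smul_apply, ContinuousLinearMap.add_apply,
      ContinuousLinearMap.comp_apply, ContinuousLinearMap.prod_apply,
      ContinuousLinearMap.coe_fst', ContinuousLinearMap.coe_snd', Lφ, Lρ, smul_eq_mul]
    try rw [clm_eval2 (fderiv ℝ f _)]
    try simp only [pdr_eq, pdz_eq]
    try clear h1 h2 hinv hX hY hcomp hρ hφ hf
    try generalize hgen : Real.sqrt (q.1 ^ 2 + q.2.1 ^ 2) = r at hq hsq ⊢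
    try field_simp
    try ring_nf
    try linear_combination (f (r, q.2.2) * r ^ 7 * 4) * hsq


lemma jdot3_revolve (ur uz vr vz : ℝ × ℝ → ℝ) (q : ℝ × ℝ × ℝ)
    (hq : 0 < Real.sqrt (q.1 ^ 2 + q.2.1 ^ 2))
    (hur : DifferentiableAt ℝ ur (Real.sqrt (q.1 ^ 2 + q.2.1 ^ 2), q.2.2))
    (huz : DifferentiableAt ℝ uz (Real.sqrt (q.1 ^ 2 + q.2.1 ^ 2), q.2.2))
    (hvr : DifferentiableAt ℝ vr (Real.sqrt (q.1 ^ 2 + q.2.1 ^ 2), q.2.2))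
    (hvz : DifferentiableAt ℝ vz (Real.sqrt (q.1 ^ 2 + q.2.1 ^ 2), q.2.2)) :
    jdot3 (revolve ur uz) (revolve vr vz) q
      = jdot2 (fun s => (ur s, uz s)) (fun s => (vr s, vz s)) (Real.sqrt (q.1 ^ 2 + q.2.1 ^ 2), q.2.2)
        + ((Real.sqrt (q.1 ^ 2 + q.2.1 ^ 2)) ^ 2)⁻¹
          * (ur (Real.sqrt (q.1 ^ 2 + q.2.1 ^ 2), q.2.2) * vr (Real.sqrt (q.1 ^ 2 + q.2.1 ^ 2), q.2.2)) := by
  obtain ⟨u1x, u1y, u1z, u2x, u2y, u2z, -, -, -⟩ := pds q ur hq hur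
  obtain ⟨-, -, -, -, -, -, u3x, u3y, u3z⟩ := pds q uz hq huz
  obtain ⟨v1x, v1y, v1z, v2x, v2y, v2z, -, -, -⟩ := pds q vr hq hvr
  obtain ⟨-, -, -, -, -, -, v3x, v3y, v3z⟩ := pds q vz hq hvz
  simp only [jdot3, jdot2, revolve]
  rw [u1x, u1y, u1z, u2x, u2y, u2z, u3x, u3y, u3z,
      v1x, v1y, v1z, v2x, v2y, v2z, v3x, v3y, v3z]
  set r := Real.sqrt (q.1 ^ 2 + q.2.1 ^ 2) with hrdef
  have hsq : r ^ 2 = q.1 ^ 2 + q.2.1 ^ 2 := Real.sq_sqrt (by positivity)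
  have hcs : (q.1 / r) ^ 2 + (q.2.1 / r) ^ 2 = 1 := by
    rw [div_pow, div_pow, ← add_div, ← hsq, div_self (pow_ne_zero 2 hq.ne')]
  set c := q.1 / r
  set s := q.2.1 / r
  set a1 := pdr ur (r, q.2.2); set a2 := pdz ur (r, q.2.2)
  set a3 := pdr uz (r, q.2.2); set a4 := pdz uz (r, q.2.2)
  set b1 := pdr vr (r, q.2.2); set b2 := pdz vr (r, q.2.2)
  set b3 := pdr vz (r, q.2.2); set b4 := pdz vz (r, q.2.2)
  set F := ur (r, q.2.2); set F' := vr (r, q.2.2)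
  linear_combination ((a1 * b1 + (F / r) * (F' / r)) * (c ^ 2 + s ^ 2 + 1)
    + a2 * b2 + a3 * b3) * hcs


-- det of prodMap with id
lemma det_prodMap_id (L : (ℝ × ℝ) →ₗ[ℝ] (ℝ × ℝ)) :
    LinearMap.det (L.prodMap (LinearMap.id : ℝ →ₗ[ℝ] ℝ)) = LinearMap.det L := by
  rw [← LinearMap.det_toMatrix ((Module.Basis.finTwoProd ℝ).prod (Module.Basis.singleton (Fin 1) ℝ)),
    LinearMap.toMatrix_prodMap, Matrix.det_fromBlocks_zero₂₁, LinearMap.det_toMatrix,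
    LinearMap.toMatrix_id, Matrix.det_one, mul_one]

def Bp (p : ℝ × ℝ) : (ℝ × ℝ) →L[ℝ] (ℝ × ℝ) :=
  LinearMap.toContinuousLinearMap (Matrix.toLin (Module.Basis.finTwoProd ℝ) (Module.Basis.finTwoProd ℝ)
    !![Real.cos p.2, -p.1 * Real.sin p.2; Real.sin p.2, p.1 * Real.cos p.2])

def B3 (x : (ℝ × ℝ) × ℝ) : ((ℝ × ℝ) × ℝ) →L[ℝ] ((ℝ × ℝ) × ℝ) :=
  (Bp x.1).prodMap (ContinuousLinearMap.id ℝ ℝ)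

lemma B3_det (x : (ℝ × ℝ) × ℝ) : (B3 x).det = x.1.1 := by
  have h1 : (Bp x.1).det = x.1.1 := by
    conv_rhs => rw [← one_mul x.1.1, ← cos_sq_add_sin_sq x.1.2]
    simp only [Bp, LinearMap.det_toContinuousLinearMap,
      LinearMap.det_toLin, Matrix.det_fin_two_of, neg_mul, sub_neg_eq_add]
    ring
  rw [← h1]
  show LinearMap.det _ = (Bp x.1).det
  simp only [B3, ContinuousLinearMap.coe_prodMap, ContinuousLinearMap.coe_id]
  rw [det_prodMap_id]

def P3 : OpenPartialHomeomorph ((ℝ × ℝ) × ℝ) ((ℝ × ℝ) × ℝ) :=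
  polarCoord.prod (OpenPartialHomeomorph.refl ℝ)

lemma P3_symm_hasFDerivAt (x : (ℝ × ℝ) × ℝ) : HasFDerivAt (P3.symm) (B3 x) x := by
  have h := (hasFDerivAt_polarCoord_symm x.1).prodMap x (hasFDerivAt_id x.2)
  exact h

lemma ae_src : (polarCoord.source ×ˢ (univ : Set ℝ)) =ᵐ[volume] (univ : Set ((ℝ × ℝ) × ℝ)) := by
  rw [Filter.eventuallyEq_set]
  have hz : volume ((polarCoord.sourceᶜ) ×ˢ (univ : Set ℝ)) = 0 := by
    rw [Measure.volume_eq_prod, Measure.prod_prod]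
    have h0 : volume polarCoord.sourceᶜ = 0 := by
      have := polarCoord_source_ae_eq_univ
      rwa [ae_eq_univ] at this
    rw [h0, zero_mul]
  refine (measure_eq_zero_iff_ae_notMem.1 hz).mono fun x hx => ?_
  have h1 : x.1 ∈ polarCoord.source := by
    by_contra h
    exact hx ⟨h, trivial⟩
  simp only [mem_prod, mem_univ, and_true, iff_true]
  exact h1

-- the reorder equiv
def eSwap : ((ℝ × ℝ) × ℝ) ≃ᵐ ((ℝ × ℝ) × ℝ) :=
  (MeasurableEquiv.prodAssoc.trans
    ((MeasurableEquiv.refl ℝ).prodCongr MeasurableEquiv.prodComm)).trans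
    MeasurableEquiv.prodAssoc.symm

lemma eSwap_apply (v : (ℝ × ℝ) × ℝ) : eSwap v = ((v.1.1, v.2), v.1.2) := rfl

lemma eSwap_mp : MeasurePreserving (⇑eSwap) (volume : Measure (((ℝ × ℝ) × ℝ))) volume := by
  have hswap : MeasurePreserving (Prod.swap) (volume : Measure (ℝ × ℝ)) volume := by
    rw [Measure.volume_eq_prod]; exact Measure.measurePreserving_swap
  have h2 : MeasurePreserving (Prod.map (id : ℝ → ℝ) (Prod.swap : ℝ × ℝ → ℝ × ℝ))
      (volume : Measure (ℝ × (ℝ × ℝ))) volume := by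
    rw [Measure.volume_eq_prod]
    exact (MeasurePreserving.id volume).prod hswap
  have h1 : MeasurePreserving (⇑(MeasurableEquiv.prodAssoc :
      ((ℝ × ℝ) × ℝ) ≃ᵐ (ℝ × (ℝ × ℝ)))) volume volume := volume_preserving_prodAssoc
  have h3 : MeasurePreserving (⇑(MeasurableEquiv.prodAssoc :
      ((ℝ × ℝ) × ℝ) ≃ᵐ (ℝ × (ℝ × ℝ))).symm) volume volume :=
    MeasurePreserving.symm _ volume_preserving_prodAssoc
  exact h3.comp (h2.comp h1)


instance : Measure.IsAddHaarMeasure (volume : Measure ((ℝ × ℝ) × ℝ)) :=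
  Measure.prod.instIsAddHaarMeasure _ _

/-- `∫_{Ω̂} Dû : Dv̂ = 2π ∫_Ω r (∇u : ∇v + r⁻² u_r v_r)`. -/
theorem integral_jacobian_frobenius_revolved
    (Ω : Set (ℝ × ℝ)) (hΩm : MeasurableSet Ω) (hΩ : Ω ⊆ {p : ℝ × ℝ | 0 < p.1})
    (ur uz vr vz : ℝ × ℝ → ℝ)
    (hu : ContDiffOn ℝ 1 (fun p => (ur p, uz p)) {p : ℝ × ℝ | 0 < p.1})
    (hv : ContDiffOn ℝ 1 (fun p => (vr p, vz p)) {p : ℝ × ℝ | 0 < p.1})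
    (hint : IntegrableOn
      (fun p : ℝ × ℝ => p.1 *
        (fnorm2 (fun s => (ur s, uz s)) p * fnorm2 (fun s => (vr s, vz s)) p
          + (p.1 ^ 2)⁻¹ * (|ur p| * |vr p|))) Ω volume) :
    ∫ q in solidRev Ω, jdot3 (revolve ur uz) (revolve vr vz) q
      = (2 * Real.pi) *
        ∫ p in Ω, p.1 * (jdot2 (fun s => (ur s, uz s)) (fun s => (vr s, vz s)) p
          + (p.1 ^ 2)⁻¹ * (ur p * vr p)) := by
  have hopen : IsOpen {p : ℝ × ℝ | 0 < p.1} := isOpen_lt continuous_const continuous_fst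
  set K : ℝ × ℝ → ℝ := fun p => jdot2 (fun s => (ur s, uz s)) (fun s => (vr s, vz s)) p
      + (p.1 ^ 2)⁻¹ * (ur p * vr p) with hK
  have hφm : Measurable (fun q : ℝ × ℝ × ℝ => (Real.sqrt (q.1 ^ 2 + q.2.1 ^ 2), q.2.2)) := by
    apply Measurable.prod
    · exact (((continuous_fst.pow 2).add
        ((continuous_fst.comp continuous_snd).pow 2)).sqrt).measurable
    · exact (continuous_snd.comp continuous_snd).measurable
  have hS : MeasurableSet (solidRev Ω) := hφm hΩm
  have hdiff : ∀ p : ℝ × ℝ, p ∈ Ω → DifferentiableAt ℝ ur p ∧ DifferentiableAt ℝ uz p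
      ∧ DifferentiableAt ℝ vr p ∧ DifferentiableAt ℝ vz p := by
    intro p hp
    have hp' := hΩ hp
    have h1 : DifferentiableAt ℝ (fun p => (ur p, uz p)) p :=
      (hu.contDiffAt (hopen.mem_nhds hp')).differentiableAt one_ne_zero
    have h2 : DifferentiableAt ℝ (fun p => (vr p, vz p)) p :=
      (hv.contDiffAt (hopen.mem_nhds hp')).differentiableAt one_ne_zero
    exact ⟨h1.fst, h1.snd, h2.fst, h2.snd⟩
  have step1 : ∫ q in solidRev Ω, jdot3 (revolve ur uz) (revolve vr vz) q
      = ∫ q in solidRev Ω, K (Real.sqrt (q.1 ^ 2 + q.2.1 ^ 2), q.2.2) := by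
    refine setIntegral_congr_fun hS fun q hq => ?_
    have hmem : (Real.sqrt (q.1 ^ 2 + q.2.1 ^ 2), q.2.2) ∈ Ω := hq
    have hpos : 0 < Real.sqrt (q.1 ^ 2 + q.2.1 ^ 2) := hΩ hmem
    obtain ⟨h1, h2, h3, h4⟩ := hdiff _ hmem
    exact jdot3_revolve ur uz vr vz q hpos h1 h2 h3 h4
  rw [step1, ← integral_indicator hS]
  have hpa := (volume_preserving_prodAssoc (α₁ := ℝ) (β₁ := ℝ) (γ₁ := ℝ)).integral_comp
    MeasurableEquiv.prodAssoc.measurableEmbedding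
    ((solidRev Ω).indicator (fun q => K (Real.sqrt (q.1 ^ 2 + q.2.1 ^ 2), q.2.2)))
  rw [← hpa, ← setIntegral_univ, setIntegral_congr_set ae_src.symm]
  have hsrc : polarCoord.source ×ˢ (univ : Set ℝ) = P3.symm.target := by
    simp [P3, OpenPartialHomeomorph.prod_source]
  have hsrc2 : P3.symm.source = polarCoord.target ×ˢ (univ : Set ℝ) := by
    simp [P3, OpenPartialHomeomorph.prod_target]
  rw [hsrc]
  rw [integral_target_eq_integral_abs_det_fderiv_smul volume
    (fun x _ => P3_symm_hasFDerivAt x)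
    (fun w : (ℝ × ℝ) × ℝ => (solidRev Ω).indicator
      (fun q => K (Real.sqrt (q.1 ^ 2 + q.2.1 ^ 2), q.2.2)) (MeasurableEquiv.prodAssoc w))]
  rw [hsrc2]
  have hT : MeasurableSet (polarCoord.target ×ˢ (univ : Set ℝ)) :=
    (polarCoord.open_target.prod isOpen_univ).measurableSet
  rw [← integral_indicator hT]
  rw [← eSwap_mp.integral_comp eSwap.measurableEmbedding]
  have hpt : ∀ v : (ℝ × ℝ) × ℝ,
      ((polarCoord.target ×ˢ (univ : Set ℝ)).indicator
        (fun x => |(B3 x).det| • ((solidRev Ω).indicator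
          (fun q => K (Real.sqrt (q.1 ^ 2 + q.2.1 ^ 2), q.2.2))
            (MeasurableEquiv.prodAssoc (P3.symm x))))) (eSwap v)
      = (Ω.indicator (fun p => p.1 * K p) v.1) * ((Ioo (-π) π).indicator 1 v.2) := by
    intro v
    rw [eSwap_apply]
    by_cases hr : 0 < v.1.1
    · by_cases hθ : v.2 ∈ Ioo (-π) π
      · have hmemT : ((v.1.1, v.2), v.1.2) ∈ polarCoord.target ×ˢ (univ : Set ℝ) := by
          constructor
          · exact ⟨hr, hθ⟩
          · trivial
        rw [indicator_of_mem hmemT]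
        have hps : P3.symm ((v.1.1, v.2), v.1.2)
            = ((v.1.1 * Real.cos v.2, v.1.1 * Real.sin v.2), v.1.2) := rfl
        rw [hps, B3_det]
        have hsqrt : Real.sqrt ((v.1.1 * Real.cos v.2) ^ 2 + (v.1.1 * Real.sin v.2) ^ 2)
            = v.1.1 := by
          rw [show (v.1.1 * Real.cos v.2) ^ 2 + (v.1.1 * Real.sin v.2) ^ 2 = v.1.1 ^ 2 by
            linear_combination (v.1.1 ^ 2) * (Real.cos_sq_add_sin_sq v.2)]
          exact Real.sqrt_sq hr.le
        have hq : MeasurableEquiv.prodAssoc (((v.1.1 * Real.cos v.2, v.1.1 * Real.sin v.2),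
            v.1.2) : (ℝ × ℝ) × ℝ)
            = (v.1.1 * Real.cos v.2, v.1.1 * Real.sin v.2, v.1.2) := rfl
        rw [hq]
        by_cases hmem : v.1 ∈ Ω
        · have hmemS : ((v.1.1 * Real.cos v.2, v.1.1 * Real.sin v.2, v.1.2) : ℝ × ℝ × ℝ)
              ∈ solidRev Ω := by
            show (Real.sqrt _, _) ∈ Ω
            simp only [hsqrt]
            exact hmem
          rw [indicator_of_mem hmemS, indicator_of_mem hmem, indicator_of_mem hθ]
          simp only [hsqrt, Pi.one_apply, mul_one, smul_eq_mul]
          rw [abs_of_pos hr]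
        · have hmemS : ((v.1.1 * Real.cos v.2, v.1.1 * Real.sin v.2, v.1.2) : ℝ × ℝ × ℝ)
              ∉ solidRev Ω := by
            show ¬ (Real.sqrt _, _) ∈ Ω
            simp only [hsqrt]
            exact hmem
          rw [indicator_of_notMem hmemS, indicator_of_notMem hmem]
          simp
      · have hmemT : ((v.1.1, v.2), v.1.2) ∉ polarCoord.target ×ˢ (univ : Set ℝ) := by
          rintro ⟨⟨-, h2⟩, -⟩
          exact hθ h2
        rw [indicator_of_notMem hmemT, indicator_of_notMem hθ]
        simp
    · have hmemT : ((v.1.1, v.2), v.1.2) ∉ polarCoord.target ×ˢ (univ : Set ℝ) := by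
        rintro ⟨⟨h1, -⟩, -⟩
        exact hr h1
      have hmem : v.1 ∉ Ω := fun h => hr (hΩ h)
      rw [indicator_of_notMem hmemT, indicator_of_notMem hmem]
      simp
  rw [show (fun v => ((polarCoord.target ×ˢ (univ : Set ℝ)).indicator
        (fun x => |(B3 x).det| • ((solidRev Ω).indicator
          (fun q => K (Real.sqrt (q.1 ^ 2 + q.2.1 ^ 2), q.2.2))
            (MeasurableEquiv.prodAssoc (P3.symm x))))) (eSwap v))
      = fun v : (ℝ × ℝ) × ℝ => (Ω.indicator (fun p => p.1 * K p) v.1)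
          * ((Ioo (-π) π).indicator 1 v.2) from funext hpt]
  rw [Measure.volume_eq_prod, integral_prod_mul, integral_indicator hΩm,
    integral_indicator_one measurableSet_Ioo, Real.volume_real_Ioo_of_le (by linarith [Real.pi_pos])]
  ring
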